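/- Let Φ be an irreducible root system with extended basis Δ' and Coxeter number h(Φ). Define the height h(α) of a root α relative to Δ' as the sum of coefficients in the unique nonnegative-integer decomposition of α in Δ' with coefficient sum < h(Φ). Then: (1) if α, β ∈ Φ with α+β ∈ Φ, we have h(α+β) ≡ h(α)+h(β) (mod h(Φ)); (2) for every α ∈ Φ, h(−α) = h(Φ) − h(α); (3) for every α ∈ Φ, h(α) ∈ {1, …, h(Φ)−1}. -/

import Mathlib

open Finset

/-- A based, irreducible, reduced root system in a Euclidean space, together with
coordinate data with respect to the base `Δ`, the highest root, and the
extended base `Δ' = Δ ∪ {-highest}`. -/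
structure BasedRootSystem (V : Type*) [NormedAddCommGroup V] [InnerProductSpace ℝ V] where
  Φ : Finset V
  zero_not_mem : (0 : V) ∉ Φ
  neg_mem : ∀ α ∈ Φ, -α ∈ Φ
  reduced : ∀ α ∈ Φ, ∀ c : ℝ, c • α ∈ Φ → c = 1 ∨ c = -1
  crystallographic : ∀ α ∈ Φ, ∀ β ∈ Φ, ∃ n : ℤ,
    2 * (inner ℝ α β : ℝ) / (inner ℝ α α : ℝ) = (n : ℝ)
  reflect_mem : ∀ α ∈ Φ, ∀ β ∈ Φ, β - (2 * (inner ℝ β α : ℝ) / (inner ℝ α α : ℝ)) • α ∈ Φ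
  Δ : Finset V
  base_sub : Δ ⊆ Φ
  indep : LinearIndependent ℝ (fun γ : Δ => (γ : V))
  coord : V → V → ℤ
  coord_zero : ∀ γ : V, coord 0 γ = 0
  coord_spec : ∀ α ∈ Φ, α = ∑ γ ∈ Δ, (coord α γ : ℝ) • γ
  coord_sign : ∀ α ∈ Φ, (∀ γ ∈ Δ, 0 ≤ coord α γ) ∨ (∀ γ ∈ Δ, coord α γ ≤ 0)
  highest : V
  highest_mem : highest ∈ Φ
  highest_pos : ∀ γ ∈ Δ, 1 ≤ coord highest γ
  highest_is_highest : ∀ α ∈ Φ, ∀ γ ∈ Δ, coord α γ ≤ coord highest γ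

namespace BasedRootSystem

variable {V : Type*} [NormedAddCommGroup V] [InnerProductSpace ℝ V] (B : BasedRootSystem V)

/-- `α` is positive relative to the base `Δ`. -/
def IsPos (α : V) : Prop := ∀ γ ∈ B.Δ, 0 ≤ B.coord α γ

/-- `ε_α` : `0` if `α` is positive, `1` otherwise. -/
noncomputable def eps (α : V) : ℤ := by
  classical exact if B.IsPos α then 0 else 1

/-- The extended base `Δ' = Δ ∪ {-α_M}`. -/
noncomputable def extBase : Finset V := by
  classical exact insert (-B.highest) B.Δ

/-- The Coxeter number: one plus the height of the highest root. -/
def cox : ℤ := (∑ γ ∈ B.Δ, B.coord B.highest γ) + 1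

/-- Coefficientwise order on affine roots `(α, n)`, via their decomposition in the
affine basis `Δ_aff`. -/
def affLe (p q : V × ℤ) : Prop :=
  p.2 ≤ q.2 ∧ ∀ γ ∈ B.Δ,
    B.coord p.1 γ + p.2 * B.coord B.highest γ ≤ B.coord q.1 γ + q.2 * B.coord B.highest γ

/-- The partial order on `Φ` induced from the affine root system:
`α ≤ β` iff `(α, v + ε_α) ≤ (β, v + ε_β)` coefficientwise for every `v`. -/
def rle (α β : V) : Prop := B.affLe (α, B.eps α) (β, B.eps β)

/-- `c` is a decomposition of `α` as a nonnegative integral combination of the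
extended base `Δ'`. -/
def IsDecomp (α : V) (c : V → ℕ) : Prop :=
  α = ∑ γ ∈ B.extBase, (c γ : ℝ) • γ

/-- The sum of the coefficients of a decomposition in `Δ'`. -/
noncomputable def decompSum (c : V → ℕ) : ℤ := ∑ γ ∈ B.extBase, (c γ : ℤ)

/-- A subset of `Φ` is `Δ'`-complete if it is downward closed for the order `rle`. -/
def Complete (Ψ : Set V) : Prop :=
  ∀ α ∈ Ψ, ∀ β ∈ B.Φ, B.rle β α → β ∈ Ψ

/-- The set of ratios `(Σ ε_{α_i})/t` over nonempty zero-sum families in `X`. -/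
noncomputable def ratioSet (X : Set V) : Set ℝ :=
  {q | ∃ (t : ℕ) (a : Fin t → V), 0 < t ∧ (∀ i, a i ∈ X) ∧ (∑ i, a i) = 0 ∧
        q = (∑ i, (B.eps (a i) : ℝ)) / (t : ℝ)}

end BasedRootSystem

namespace BasedRootSystem

variable {V : Type*} [NormedAddCommGroup V] [InnerProductSpace ℝ V] (B : BasedRootSystem V)

open scoped Classical in
lemma extBase_eq : B.extBase = insert (-B.highest) B.Δ := by
  rw [BasedRootSystem.extBase]

/-- Uniqueness of real coefficients w.r.t. the base. -/
lemma coeff_unique {f g : V → ℝ}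
    (h : ∑ γ ∈ B.Δ, f γ • γ = ∑ γ ∈ B.Δ, g γ • γ) : ∀ γ ∈ B.Δ, f γ = g γ := by
  have h1 := Finset.sum_attach B.Δ (fun v => f v • v)
  have h2 := Finset.sum_attach B.Δ (fun v => g v • v)
  have hz : ∑ γ ∈ B.Δ.attach, (f (γ : V) - g (γ : V)) • (γ : V) = 0 := by
    simp only [sub_smul, Finset.sum_sub_distrib, h1, h2, h, sub_self]
  intro γ hγ
  have := linearIndependent_iff'.mp B.indep B.Δ.attach
    (fun γ => f (γ : V) - g (γ : V)) hz ⟨γ, hγ⟩ (Finset.mem_attach _ _)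
  have : f γ - g γ = 0 := this
  linarith

lemma coord_eq {α : V} (hα : α ∈ B.Φ) {d : V → ℤ}
    (h : α = ∑ γ ∈ B.Δ, (d γ : ℝ) • γ) : ∀ γ ∈ B.Δ, B.coord α γ = d γ := by
  intro γ hγ
  have := B.coeff_unique (f := fun γ => (B.coord α γ : ℝ)) (g := fun γ => (d γ : ℝ))
    ((B.coord_spec α hα).symm.trans h) γ hγ
  exact Int.cast_injective this

lemma coord_neg {α : V} (hα : α ∈ B.Φ) (hnα : -α ∈ B.Φ) :
    ∀ γ ∈ B.Δ, B.coord (-α) γ = - B.coord α γ := by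
  apply B.coord_eq hnα
  conv_lhs => rw [B.coord_spec α hα]
  rw [← Finset.sum_neg_distrib]
  apply Finset.sum_congr rfl
  intro x hx
  push_cast
  rw [neg_smul]

lemma coord_add {α β : V} (hα : α ∈ B.Φ) (hβ : β ∈ B.Φ) (hab : α + β ∈ B.Φ) :
    ∀ γ ∈ B.Δ, B.coord (α + β) γ = B.coord α γ + B.coord β γ := by
  apply B.coord_eq hab
  conv_lhs => rw [B.coord_spec α hα, B.coord_spec β hβ]
  rw [← Finset.sum_add_distrib]
  apply Finset.sum_congr rfl
  intro x hx
  push_cast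
  rw [add_smul]

lemma neg_highest_not_mem : -B.highest ∉ B.Δ := by
  classical
  intro hmem
  have hΦ : -B.highest ∈ B.Φ := B.base_sub hmem
  have h1 := B.coord_neg B.highest_mem hΦ (-B.highest) hmem
  have h2 : B.coord (-B.highest) (-B.highest) = 1 := by
    have := B.coord_eq hΦ (d := fun γ => if γ = -B.highest then 1 else 0) ?_ (-B.highest) hmem
    · simpa using this
    · rw [show ∑ γ ∈ B.Δ, (((if γ = -B.highest then 1 else 0 : ℤ)) : ℝ) • γ
          = ∑ γ ∈ B.Δ, (if γ = -B.highest then ((1:ℝ) • γ) else 0) from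
          Finset.sum_congr rfl (by intro x hx; split <;> simp)]
      rw [Finset.sum_ite_eq' B.Δ (-B.highest) (fun γ => (1:ℝ) • γ)]
      simp [hmem]
  have h3 := B.highest_pos (-B.highest) hmem
  omega

/-- The coefficient sum of any decomposition in the extended base is congruent,
modulo the Coxeter number, to the sum of the coordinates. -/
lemma decompSum_modeq {α : V} (hα : α ∈ B.Φ) {c : V → ℕ} (hc : B.IsDecomp α c) :
    B.decompSum c ≡ (∑ γ ∈ B.Δ, B.coord α γ) [ZMOD B.cox] := by
  classical
  have hnm := B.neg_highest_not_mem
  set k : ℤ := (c (-B.highest) : ℤ) with hkdef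
  have hα' : α = ∑ γ ∈ B.Δ, (((c γ : ℤ) - k * B.coord B.highest γ : ℤ) : ℝ) • γ := by
    have hc' : α = ∑ γ ∈ B.extBase, (c γ : ℝ) • γ := hc
    rw [B.extBase_eq, Finset.sum_insert hnm] at hc'
    set k' : ℝ := ((c (-B.highest) : ℕ) : ℝ) with hk
    rw [hc']
    have hh := B.coord_spec B.highest B.highest_mem
    calc k' • (-B.highest) + ∑ γ ∈ B.Δ, (c γ : ℝ) • γ
        = -(k' • ∑ γ ∈ B.Δ, (B.coord B.highest γ : ℝ) • γ)
            + ∑ γ ∈ B.Δ, (c γ : ℝ) • γ := by rw [smul_neg, ← hh]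
      _ = ∑ γ ∈ B.Δ, ((c γ : ℝ) • γ - k' • (B.coord B.highest γ : ℝ) • γ) := by
            rw [Finset.smul_sum, neg_add_eq_sub, Finset.sum_sub_distrib]
      _ = ∑ γ ∈ B.Δ, (((c γ : ℤ) - k * B.coord B.highest γ : ℤ) : ℝ) • γ := by
            apply Finset.sum_congr rfl
            intro x hx
            rw [smul_smul, ← sub_smul]
            congr 1
            push_cast [hk, hkdef]
            ring
  have hd := B.coord_eq hα hα'
  have hsum : B.decompSum c = k + ∑ γ ∈ B.Δ, (c γ : ℤ) := by
    rw [show B.decompSum c = ∑ γ ∈ B.extBase, (c γ : ℤ) from rfl,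
      B.extBase_eq, Finset.sum_insert hnm]
  have hsum2 : ∑ γ ∈ B.Δ, (c γ : ℤ)
      = (∑ γ ∈ B.Δ, B.coord α γ) + k * (∑ γ ∈ B.Δ, B.coord B.highest γ) := by
    rw [Finset.mul_sum, ← Finset.sum_add_distrib]
    apply Finset.sum_congr rfl
    intro x hx
    have := hd x hx
    omega
  have : B.decompSum c = (∑ γ ∈ B.Δ, B.coord α γ) + k * B.cox := by
    rw [hsum, hsum2, BasedRootSystem.cox]; ring
  rw [this]
  simpa using (Int.modEq_iff_dvd.mpr ⟨-k, by ring⟩ :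
    (∑ γ ∈ B.Δ, B.coord α γ) + k * B.cox ≡ (∑ γ ∈ B.Δ, B.coord α γ) [ZMOD B.cox])

lemma decompSum_nonneg (c : V → ℕ) : 0 ≤ B.decompSum c :=
  Finset.sum_nonneg fun _ _ => Int.natCast_nonneg _

lemma one_le_decompSum {α : V} (hα : α ∈ B.Φ) {c : V → ℕ} (hc : B.IsDecomp α c) :
    1 ≤ B.decompSum c := by
  rcases lt_or_ge 0 (B.decompSum c) with h | h
  · exact h
  · exfalso
    have h0 : B.decompSum c = 0 := le_antisymm h (B.decompSum_nonneg c)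
    have hz : ∀ γ ∈ B.extBase, (c γ : ℤ) = 0 := by
      intro γ hγ
      have := (Finset.sum_eq_zero_iff_of_nonneg
        (fun γ _ => Int.natCast_nonneg (c γ))).mp h0 γ hγ
      exact this
    have : α = 0 := by
      have hc' : α = ∑ γ ∈ B.extBase, (c γ : ℝ) • γ := hc
      rw [hc']
      apply Finset.sum_eq_zero
      intro γ hγ
      have : (c γ : ℤ) = 0 := hz γ hγ
      have : c γ = 0 := by exact_mod_cast this
      simp [this]
    exact B.zero_not_mem (this ▸ hα)

end BasedRootSystem

/-- properties of the height relative to `Δ'` (given here through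
the coefficient sums of the unique decompositions with coefficient sum `< h(Φ)`):
additivity modulo `h(Φ)`, the relation `h(-α) = h(Φ) - h(α)`, and the bounds
`1 ≤ h(α) ≤ h(Φ) - 1`. -/
theorem stmt1 {V : Type*} [NormedAddCommGroup V] [InnerProductSpace ℝ V]
    (B : BasedRootSystem V) (α β : V) (hα : α ∈ B.Φ) (hβ : β ∈ B.Φ)
    (cα cβ cnα : V → ℕ)
    (hcα : B.IsDecomp α cα) (hcα' : B.decompSum cα < B.cox)
    (hcβ : B.IsDecomp β cβ) (hcβ' : B.decompSum cβ < B.cox)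
    (hcnα : B.IsDecomp (-α) cnα) (hcnα' : B.decompSum cnα < B.cox) :
    (α + β ∈ B.Φ → ∀ cs : V → ℕ, B.IsDecomp (α + β) cs → B.decompSum cs < B.cox →
        B.decompSum cs ≡ B.decompSum cα + B.decompSum cβ [ZMOD B.cox]) ∧
    B.decompSum cnα = B.cox - B.decompSum cα ∧
    (1 ≤ B.decompSum cα ∧ B.decompSum cα ≤ B.cox - 1) := by
  have hnα : -α ∈ B.Φ := B.neg_mem α hα
  have hmα := B.decompSum_modeq hα hcα
  have hmβ := B.decompSum_modeq hβ hcβ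
  have hmnα := B.decompSum_modeq hnα hcnα
  have h1α := B.one_le_decompSum hα hcα
  have h1β := B.one_le_decompSum hβ hcβ
  have h1nα := B.one_le_decompSum hnα hcnα
  have hHneg : (∑ γ ∈ B.Δ, B.coord (-α) γ) = -(∑ γ ∈ B.Δ, B.coord α γ) := by
    rw [← Finset.sum_neg_distrib]
    exact Finset.sum_congr rfl (B.coord_neg hα hnα)
  refine ⟨?_, ?_, h1α, by omega⟩
  · intro hab cs hcs hcs'
    have hms := B.decompSum_modeq hab hcs
    have hHadd : (∑ γ ∈ B.Δ, B.coord (α + β) γ)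
        = (∑ γ ∈ B.Δ, B.coord α γ) + (∑ γ ∈ B.Δ, B.coord β γ) := by
      rw [← Finset.sum_add_distrib]
      exact Finset.sum_congr rfl (B.coord_add hα hβ hab)
    calc B.decompSum cs ≡ (∑ γ ∈ B.Δ, B.coord (α + β) γ) [ZMOD B.cox] := hms
      _ = (∑ γ ∈ B.Δ, B.coord α γ) + (∑ γ ∈ B.Δ, B.coord β γ) := hHadd
      _ ≡ B.decompSum cα + B.decompSum cβ [ZMOD B.cox] := (hmα.add hmβ).symm
  · -- decompSum cnα = cox - decompSum cα
    have hcong : B.decompSum cnα ≡ B.cox - B.decompSum cα [ZMOD B.cox] := by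
      calc B.decompSum cnα ≡ (∑ γ ∈ B.Δ, B.coord (-α) γ) [ZMOD B.cox] := hmnα
        _ = -(∑ γ ∈ B.Δ, B.coord α γ) := hHneg
        _ ≡ -(B.decompSum cα) [ZMOD B.cox] := hmα.symm.neg
        _ ≡ B.cox - B.decompSum cα [ZMOD B.cox] :=
            Int.modEq_iff_dvd.mpr ⟨1, by ring⟩
    have hdvd : B.cox ∣ (B.cox - B.decompSum cα) - B.decompSum cnα := hcong.dvd
    have : (B.cox - B.decompSum cα) - B.decompSum cnα = 0 := by
      apply Int.eq_zero_of_abs_lt_dvd hdvd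
      rw [abs_lt]
      omega
    omega
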